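/- Let n ≥ 0 and let k be an integer with k ≥ n+2. Define h : ℝ → ℝ by h(ω) = Σ_{i=1}^{n+1} C(k−1, i−1) · (1−ω)^{i−1} · ω^{k−i}. Then h is strictly monotone increasing on the half-open interval [0, 1): for all ω1, ω2 with 0 ≤ ω1 < ω2 < 1, h(ω1) < h(ω2). -/

import Mathlib

open Finset

lemma gmb_deriv (m n : ℕ) (x : ℝ) :
    HasDerivAt (fun ω : ℝ => ∑ j ∈ Finset.range (n+1),
        (Nat.choose m j : ℝ) * (1-ω)^j * ω^(m-j))
      (((n:ℝ)+1) * (Nat.choose m (n+1)) * (1-x)^n * x^(m-(n+1))) x := by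
  set S : ℕ → ℝ := fun j => (j : ℝ) * (Nat.choose m j : ℝ) * (1-x)^(j-1) * x^(m-j) with hS
  have hsum : HasDerivAt (fun ω : ℝ => ∑ j ∈ Finset.range (n+1),
      (Nat.choose m j : ℝ) * (1-ω)^j * ω^(m-j))
      (∑ j ∈ Finset.range (n+1), (S (j+1) - S j)) x := by
    apply HasDerivAt.fun_sum
    intro j hj
    have h1 : HasDerivAt (fun ω : ℝ => (1-ω)^j) ((j:ℝ) * (1-x)^(j-1) * (-1)) x :=
      ((hasDerivAt_id x).const_sub 1).pow j
    have h2 : HasDerivAt (fun ω : ℝ => ω^(m-j)) (((m-j : ℕ):ℝ) * x^(m-j-1)) x := by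
      simpa using hasDerivAt_pow (m-j) x
    have h3 := (h1.const_mul (Nat.choose m j : ℝ)).fun_mul h2
    convert h3 using 1
    · rfl
    have hid : ((Nat.choose m (j+1) : ℕ) : ℝ) * ((j:ℝ)+1) = (Nat.choose m j : ℝ) * ((m-j : ℕ):ℝ) := by
      exact_mod_cast congrArg (Nat.cast : ℕ → ℝ) (Nat.choose_succ_right_eq m j)
    have e2 : m - (j+1) = m - j - 1 := by omega
    simp only [hS, Nat.add_sub_cancel, e2]
    push_cast
    linear_combination ((1-x)^j * x^(m-j-1)) * hid
  have htel : (∑ j ∈ Finset.range (n+1), (S (j+1) - S j)) = S (n+1) - S 0 :=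
    Finset.sum_range_sub S (n+1)
  have hS0 : S 0 = 0 := by simp [hS]
  have : (∑ j ∈ Finset.range (n+1), (S (j+1) - S j))
      = ((n:ℝ)+1) * (Nat.choose m (n+1)) * (1-x)^n * x^(m-(n+1)) := by
    rw [htel, hS0, hS]; push_cast; ring_nf
  rwa [this] at hsum

lemma gmb_mono (m n : ℕ) (hmn : n+1 ≤ m) :
    StrictMonoOn (fun ω : ℝ => ∑ j ∈ Finset.range (n+1),
      (Nat.choose m j : ℝ) * (1-ω)^j * ω^(m-j)) (Set.Icc 0 1) := by
  apply strictMonoOn_of_deriv_pos (convex_Icc 0 1)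
  · apply Continuous.continuousOn
    continuity
  · intro x hx
    rw [interior_Icc, Set.mem_Ioo] at hx
    rw [(gmb_deriv m n x).deriv]
    have hc : (0:ℝ) < (Nat.choose m (n+1) : ℝ) := by
      exact_mod_cast Nat.choose_pos hmn
    have h1 : (0:ℝ) < (n:ℝ)+1 := by positivity
    have h2 : (0:ℝ) < (1-x)^n := pow_pos (by linarith [hx.2]) n
    have h3 : (0:ℝ) < x^(m-(n+1)) := pow_pos hx.1 _
    exact mul_pos (mul_pos (mul_pos h1 hc) h2) h3

theorem stmt11 (n k : ℕ) (hk : n + 2 ≤ k) :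
    ∀ ω1 ω2 : ℝ, 0 ≤ ω1 → ω1 < ω2 → ω2 < 1 →
      (∑ i ∈ Finset.Icc 1 (n + 1),
          (Nat.choose (k - 1) (i - 1) : ℝ) * (1 - ω1) ^ (i - 1) * ω1 ^ (k - i))
        < ∑ i ∈ Finset.Icc 1 (n + 1),
            (Nat.choose (k - 1) (i - 1) : ℝ) * (1 - ω2) ^ (i - 1) * ω2 ^ (k - i) := by
  intro ω1 ω2 h0 h12 h21
  have reidx : ∀ ω : ℝ,
      (∑ i ∈ Finset.Icc 1 (n + 1), (Nat.choose (k-1) (i-1):ℝ) * (1-ω)^(i-1) * ω^(k-i))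
      = ∑ j ∈ Finset.range (n+1), (Nat.choose (k-1) j : ℝ) * (1-ω)^j * ω^((k-1)-j) := by
    intro ω
    rw [← Finset.Ico_add_one_right_eq_Icc, Finset.sum_Ico_eq_sum_range]
    apply Finset.sum_congr (by norm_num)
    intro j _
    have e1 : 1 + j - 1 = j := by omega
    have e2 : k - (1+j) = k - 1 - j := by omega
    rw [e1, e2]
  rw [reidx ω1, reidx ω2]
  have hmn : n + 1 ≤ k - 1 := by omega
  exact gmb_mono (k-1) n hmn (Set.mem_Icc.mpr ⟨h0, by linarith⟩)
    (Set.mem_Icc.mpr ⟨by linarith, by linarith⟩) h12
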